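/- For n ≥ 3, the number of affine equivalence classes into which the set of quadratic MRS functions {(0,t)_n : 1 ≤ t ≤ ⌊n/2⌋} is partitioned by affine equivalence equals τ(n) − 1, where τ(n) is the number of positive divisors of n. -/

import Mathlib

/-- The monomial rotation symmetric quadratic function `(0,t)_n` for `t < n/2`:
`x ↦ ∑_{j=0}^{n-1} x_j * x_{(j+t) mod n}` over `ZMod 2`. -/
def mrs (n t : ℕ) (x : Fin n → ZMod 2) : ZMod 2 :=
  ∑ j : Fin n, x j * x ⟨(j.val + t) % n, Nat.mod_lt _ j.pos⟩

/-- The short MRS function `(0,k)_{2k}`: `x ↦ ∑_{j=0}^{k-1} x_j * x_{j+k}`. -/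
def shortMrs (n t : ℕ) (x : Fin n → ZMod 2) : ZMod 2 :=
  ∑ j ∈ Finset.univ.filter (fun j : Fin n => j.val < t),
    x j * x ⟨(j.val + t) % n, Nat.mod_lt _ j.pos⟩

/-- The quadratic MRS function `(0,t)_n`, including the short case `n = 2t`. -/
def rsFun (n t : ℕ) : (Fin n → ZMod 2) → ZMod 2 :=
  if 2 * t = n then shortMrs n t else mrs n t

/-- Affine equivalence of Boolean functions. -/
def AffEquiv (n : ℕ) (f g : (Fin n → ZMod 2) → ZMod 2) : Prop :=
  ∃ (A : Matrix (Fin n) (Fin n) (ZMod 2)) (b : Fin n → ZMod 2),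
    IsUnit A ∧ ∀ x, f x = g (A.mulVec x + b)


set_option linter.unusedSectionVars false

namespace MrsAux
open Finset

def χ (a : ZMod 2) : ℤ := if a = 0 then 1 else -1

lemma chi_add : ∀ a b : ZMod 2, χ (a + b) = χ a * χ b := by decide

lemma chi_zero : χ 0 = 1 := rfl
lemma chi_one : χ 1 = -1 := rfl

lemma zmod2_eq_one' : ∀ a : ZMod 2, a ≠ 0 → a = 1 := by decide
lemma zmod2_eq_one {a : ZMod 2} (h : a ≠ 0) : a = 1 := zmod2_eq_one' a h

variable {ι : Type} [Fintype ι] [DecidableEq ι]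

def Sinv (f : (ι → ZMod 2) → ZMod 2) : ℤ := ∑ x : ι → ZMod 2, χ (f x)

def LinStruct (f : (ι → ZMod 2) → ZMod 2) (c : ι → ZMod 2) : Prop :=
  ∃ ε, ∀ x, f (x + c) = f x + ε

noncomputable def Linv (f : (ι → ZMod 2) → ZMod 2) : ℕ := Nat.card {c : ι → ZMod 2 // LinStruct f c}

lemma pi_add_self (v : ι → ZMod 2) : v + v = 0 := by
  funext i; exact CharTwo.add_self_eq_zero _

lemma shift_bijective (c : ι → ZMod 2) :
    Function.Bijective (fun x : ι → ZMod 2 => x + c) :=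
  (Equiv.addRight c).bijective

lemma sum_chi_zero (f : (ι → ZMod 2) → ZMod 2) (c : ι → ZMod 2)
    (h : ∀ x, f (x + c) = f x + 1) : Sinv f = 0 := by
  have h1 : Sinv f = ∑ x : ι → ZMod 2, χ (f (x + c)) :=
    (Fintype.sum_bijective _ (shift_bijective c) _ _ (fun x => rfl)).symm.trans rfl
  have h2 : ∑ x : ι → ZMod 2, χ (f (x + c)) = -Sinv f := by
    simp only [h, chi_add, chi_one, Sinv]
    rw [← Finset.sum_neg_distrib]
    exact Finset.sum_congr rfl (fun x _ => by ring)
  have := h1.trans h2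
  linarith

def dot (x v : ι → ZMod 2) : ZMod 2 := ∑ j, x j * v j

lemma dot_add_left (x c v : ι → ZMod 2) : dot (x + c) v = dot x v + dot c v := by
  simp only [dot, Pi.add_apply, add_mul, Finset.sum_add_distrib]

lemma dot_single (j₀ : ι) (v : ι → ZMod 2) : dot (Pi.single j₀ 1) v = v j₀ := by
  unfold dot
  rw [Finset.sum_eq_single j₀]
  · simp
  · intro b _ hb; simp [Pi.single_eq_of_ne hb]
  · simp

lemma dot_zero_right (x : ι → ZMod 2) : dot x 0 = 0 := by simp [dot]

lemma sum_chi_dot (v : ι → ZMod 2) :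
    (∑ x : ι → ZMod 2, χ (dot x v)) = if v = 0 then 2 ^ Fintype.card ι else 0 := by
  split_ifs with hv
  · subst hv
    simp only [dot_zero_right, chi_zero, Finset.sum_const, Finset.card_univ]
    simp [Fintype.card_fun]
  · have : ∃ j₀, v j₀ ≠ 0 := by
      by_contra h
      push_neg at h
      exact hv (funext h)
    obtain ⟨j₀, hj₀⟩ := this
    exact sum_chi_zero (fun x => dot x v) (Pi.single j₀ 1) (fun x => by
      show dot (x + Pi.single j₀ 1) v = dot x v + 1
      rw [dot_add_left, dot_single, zmod2_eq_one hj₀])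

lemma sinv_mul_self (f : (ι → ZMod 2) → ZMod 2) (D : (ι → ZMod 2) → ι → ZMod 2)
    (hexp : ∀ x c, f (x + c) = f x + dot x (D c) + f c) :
    Sinv f * Sinv f =
      ∑ c : ι → ZMod 2, (if D c = 0 then χ (f c) * 2 ^ Fintype.card ι else 0) := by
  have key : ∀ x c, f x + f (x + c) = dot x (D c) + f c := by
    intro x c
    rw [hexp x c]
    abel_nf
    rw [show (2 : ℤ) • f x = 0 by
      have : f x + f x = 0 := CharTwo.add_self_eq_zero _
      simpa [two_smul] using this]
    abel
  calc Sinv f * Sinv f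
      = ∑ x : ι → ZMod 2, ∑ y : ι → ZMod 2, χ (f x) * χ (f y) := by
        rw [Sinv, Finset.sum_mul_sum]
    _ = ∑ x : ι → ZMod 2, ∑ c : ι → ZMod 2, χ (dot x (D c)) * χ (f c) := by
        refine Finset.sum_congr rfl (fun x _ => ?_)
        have := Fintype.sum_bijective (fun c : ι → ZMod 2 => x + c)
          ((Equiv.addLeft x).bijective)
          (fun c => χ (dot x (D c)) * χ (f c)) (fun y => χ (f x) * χ (f y))
          (fun c => by
            show χ (dot x (D c)) * χ (f c) = χ (f x) * χ (f (x + c))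
            rw [← chi_add, ← chi_add, key x c])
        exact this.symm
    _ = ∑ c : ι → ZMod 2, (∑ x : ι → ZMod 2, χ (dot x (D c))) * χ (f c) := by
        rw [Finset.sum_comm]
        exact Finset.sum_congr rfl (fun c _ => by rw [Finset.sum_mul])
    _ = _ := by
        refine Finset.sum_congr rfl (fun c _ => ?_)
        rw [sum_chi_dot]
        split_ifs with h <;> ring

end MrsAux

namespace MrsAux

section Invariance
open Finset
variable {n : ℕ}

/-- Reflexivity of affine equivalence. -/
lemma affEquiv_refl (f : (Fin n → ZMod 2) → ZMod 2) : AffEquiv n f f := by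
  refine ⟨1, 0, isUnit_one, fun x => by simp [Matrix.one_mulVec]⟩

lemma affEquiv_symm {f g : (Fin n → ZMod 2) → ZMod 2} (h : AffEquiv n f g) :
    AffEquiv n g f := by
  obtain ⟨A, b, hA, hfg⟩ := h
  obtain ⟨U, rfl⟩ := hA
  refine ⟨(↑U⁻¹ : Matrix (Fin n) (Fin n) (ZMod 2)), (↑U⁻¹ : Matrix _ _ _).mulVec b,
    ⟨U⁻¹, rfl⟩, fun y => ?_⟩
  have h1 : (U : Matrix (Fin n) (Fin n) (ZMod 2)).mulVec
      ((↑U⁻¹ : Matrix _ _ _).mulVec (y + b)) = y + b := by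
    rw [Matrix.mulVec_mulVec, ← Units.val_mul, mul_inv_cancel, Units.val_one,
      Matrix.one_mulVec]
  have := hfg ((↑U⁻¹ : Matrix _ _ _).mulVec (y + b))
  rw [h1] at this
  have hy : y + b + b = y := by
    rw [add_assoc, pi_add_self, add_zero]
  rw [hy] at this
  rw [← this, Matrix.mulVec_add]

lemma affEquiv_trans {f g h : (Fin n → ZMod 2) → ZMod 2} (h1 : AffEquiv n f g)
    (h2 : AffEquiv n g h) : AffEquiv n f h := by
  obtain ⟨A, b, hA, hfg⟩ := h1
  obtain ⟨A', b', hA', hgh⟩ := h2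
  refine ⟨A' * A, A'.mulVec b + b', hA'.mul hA, fun x => ?_⟩
  rw [hfg x, hgh (A.mulVec x + b), Matrix.mulVec_add, ← Matrix.mulVec_mulVec, add_assoc]

/-- The affine substitution as an equivalence. -/
noncomputable def affMap {A : Matrix (Fin n) (Fin n) (ZMod 2)} (hA : IsUnit A)
    (b : Fin n → ZMod 2) : (Fin n → ZMod 2) ≃ (Fin n → ZMod 2) where
  toFun x := A.mulVec x + b
  invFun y := (↑(hA.unit⁻¹) : Matrix (Fin n) (Fin n) (ZMod 2)).mulVec (y + b)
  left_inv x := by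
    show (↑(hA.unit⁻¹) : Matrix (Fin n) (Fin n) (ZMod 2)).mulVec (A.mulVec x + b + b) = x
    have : (↑(hA.unit⁻¹) : Matrix (Fin n) (Fin n) (ZMod 2)).mulVec (A.mulVec x) = x := by
      rw [Matrix.mulVec_mulVec]
      nth_rewrite 2 [← hA.unit_spec]
      rw [← Units.val_mul, inv_mul_cancel, Units.val_one, Matrix.one_mulVec]
    rw [add_assoc, pi_add_self, add_zero, this]
  right_inv y := by
    show A.mulVec ((↑(hA.unit⁻¹) : Matrix (Fin n) (Fin n) (ZMod 2)).mulVec (y + b)) + b = y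
    have : A.mulVec ((↑(hA.unit⁻¹) : Matrix (Fin n) (Fin n) (ZMod 2)).mulVec (y + b))
        = y + b := by
      rw [Matrix.mulVec_mulVec]
      nth_rewrite 1 [← hA.unit_spec]
      rw [← Units.val_mul, mul_inv_cancel, Units.val_one, Matrix.one_mulVec]
    rw [this, add_assoc, pi_add_self, add_zero]

lemma sinv_eq_of_affEquiv {f g : (Fin n → ZMod 2) → ZMod 2} (h : AffEquiv n f g) :
    Sinv f = Sinv g := by
  obtain ⟨A, b, hA, hfg⟩ := h
  unfold Sinv
  have hbij : Function.Bijective (fun x : Fin n → ZMod 2 => A.mulVec x + b) :=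
    (affMap hA b).bijective
  exact Fintype.sum_bijective _ hbij _ _
    (fun x => by show χ (f x) = χ (g (A.mulVec x + b)); rw [hfg x])

lemma linStruct_map {f g : (Fin n → ZMod 2) → ZMod 2}
    (A : Matrix (Fin n) (Fin n) (ZMod 2)) (b : Fin n → ZMod 2)
    (hsurj : Function.Surjective (fun x : Fin n → ZMod 2 => A.mulVec x + b))
    (hfg : ∀ x, f x = g (A.mulVec x + b)) {c : Fin n → ZMod 2}
    (hc : LinStruct f c) : LinStruct g (A.mulVec c) := by
  obtain ⟨ε, hε⟩ := hc
  refine ⟨ε, fun y => ?_⟩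
  obtain ⟨x, hx⟩ := hsurj y
  simp only at hx
  subst hx
  have h1 : A.mulVec x + b + A.mulVec c = A.mulVec (x + c) + b := by
    rw [Matrix.mulVec_add]; abel
  rw [h1, ← hfg, ← hfg, hε]

lemma linv_eq_of_affEquiv {f g : (Fin n → ZMod 2) → ZMod 2} (h : AffEquiv n f g) :
    Linv f = Linv g := by
  obtain ⟨A, b, hA, hfg⟩ := h
  set B : Matrix (Fin n) (Fin n) (ZMod 2) := (↑(hA.unit⁻¹) : Matrix (Fin n) (Fin n) (ZMod 2))
    with hB
  have hBA : ∀ c, B.mulVec (A.mulVec c) = c := by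
    intro c
    rw [Matrix.mulVec_mulVec, hB]
    nth_rewrite 2 [← hA.unit_spec]
    rw [← Units.val_mul, inv_mul_cancel, Units.val_one, Matrix.one_mulVec]
  have hAB : ∀ c, A.mulVec (B.mulVec c) = c := by
    intro c
    rw [Matrix.mulVec_mulVec, hB]
    nth_rewrite 1 [← hA.unit_spec]
    rw [← Units.val_mul, mul_inv_cancel, Units.val_one, Matrix.one_mulVec]
  have hsurj : Function.Surjective (fun x : Fin n → ZMod 2 => A.mulVec x + b) :=
    (affMap hA b).surjective
  have hsurj' : Function.Surjective (fun y : Fin n → ZMod 2 => B.mulVec (y + b)) := by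
    intro x
    exact ⟨A.mulVec x + b, by simp only; rw [add_assoc, pi_add_self, add_zero, hBA]⟩
  have hgf : ∀ y, g y = f (B.mulVec (y + b)) := by
    intro y
    rw [hfg (B.mulVec (y + b)), hAB, add_assoc, pi_add_self, add_zero]
  have fwd : ∀ c : Fin n → ZMod 2, LinStruct f c → LinStruct g (A.mulVec c) :=
    fun c hc => linStruct_map A b hsurj hfg hc
  have bwd : ∀ c : Fin n → ZMod 2, LinStruct g c → LinStruct f (B.mulVec c) := by
    intro c hc
    obtain ⟨ε, hε⟩ := hc
    refine ⟨ε, fun x => ?_⟩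
    rw [hfg, hfg x]
    have h1 : A.mulVec (x + B.mulVec c) + b = (A.mulVec x + b) + c := by
      rw [Matrix.mulVec_add, hAB]; abel
    rw [h1, hε]
  apply Nat.card_congr
  exact ⟨fun c => ⟨A.mulVec c.1, fwd c.1 c.2⟩, fun c => ⟨B.mulVec c.1, bwd c.1 c.2⟩,
    fun c => Subtype.ext (hBA c.1), fun c => Subtype.ext (hAB c.1)⟩


end Invariance

section Reindex
open Finset
variable {κ ι : Type} [Fintype κ] [DecidableEq κ] [Fintype ι] [DecidableEq ι]

lemma sinv_reindex (e : κ ≃ ι) (F : (ι → ZMod 2) → ZMod 2) :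
    Sinv (fun x : κ → ZMod 2 => F (fun i => x (e.symm i))) = Sinv F := by
  unfold Sinv
  exact Fintype.sum_bijective (fun (x : κ → ZMod 2) (i : ι) => x (e.symm i))
    (Equiv.arrowCongr e (Equiv.refl (ZMod 2))).bijective _ _ (fun x => rfl)

lemma linv_reindex (e : κ ≃ ι) (F : (ι → ZMod 2) → ZMod 2) :
    Linv (fun x : κ → ZMod 2 => F (fun i => x (e.symm i))) = Linv F := by
  apply Nat.card_congr
  refine ⟨fun c => ⟨fun i => c.1 (e.symm i), ?_⟩, fun c => ⟨fun k => c.1 (e k), ?_⟩,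
    fun c => Subtype.ext (by funext k; simp), fun c => Subtype.ext (by funext i; simp)⟩
  · obtain ⟨ε, hε⟩ := c.2
    refine ⟨ε, fun y => ?_⟩
    have := hε (fun k => y (e k))
    simpa [Pi.add_def] using this
  · obtain ⟨ε, hε⟩ := c.2
    refine ⟨ε, fun x => ?_⟩
    have := hε (fun i => x (e.symm i))
    simpa [Pi.add_def] using this

end Reindex

end MrsAux

namespace MrsAux
open Finset

section ZModLevel
variable (n : ℕ) [NeZero n]

lemma npos : 0 < n := Nat.pos_of_ne_zero (NeZero.ne n)

def finZModEquiv : Fin n ≃ ZMod n where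
  toFun j := (j.val : ZMod n)
  invFun c := ⟨c.val, ZMod.val_lt c⟩
  left_inv j := by
    ext
    simp [ZMod.val_natCast, Nat.mod_eq_of_lt j.isLt]
  right_inv c := ZMod.natCast_rightInverse c

def Ft (t : ℕ) (x : ZMod n → ZMod 2) : ZMod 2 :=
  ∑ j : ZMod n, x j * x (j + (t : ZMod n))

def Fsh (t : ℕ) (x : ZMod n → ZMod 2) : ZMod 2 :=
  ∑ j ∈ Finset.univ.filter (fun j : ZMod n => j.val < t), x j * x (j + (t : ZMod n))

def Dt (t : ℕ) (c : ZMod n → ZMod 2) : ZMod n → ZMod 2 :=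
  fun j => c (j + (t : ZMod n)) + c (j - (t : ZMod n))

variable {n}

lemma val_add_nat (j : Fin n) (t : ℕ) :
    ((j.val : ZMod n) + (t : ZMod n)).val = (j.val + t) % n := by
  rw [ZMod.val_add, ZMod.val_natCast, ZMod.val_natCast, Nat.mod_eq_of_lt j.isLt]
  conv_rhs => rw [Nat.add_mod]
  rw [Nat.mod_eq_of_lt j.isLt]

lemma mrs_eq (t : ℕ) (x : Fin n → ZMod 2) :
    mrs n t x = Ft n t (fun c => x ((finZModEquiv n).symm c)) := by
  unfold mrs Ft
  refine Fintype.sum_bijective (finZModEquiv n) (finZModEquiv n).bijective _ _ (fun j => ?_)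
  show x j * x ⟨(j.val + t) % n, Nat.mod_lt _ j.pos⟩ =
    x ⟨((j.val : ZMod n)).val, ZMod.val_lt _⟩ *
      x ⟨((j.val : ZMod n) + (t : ZMod n)).val, ZMod.val_lt _⟩
  have h1 : (⟨((j.val : ZMod n)).val, ZMod.val_lt _⟩ : Fin n) = j := by
    ext; simp [ZMod.val_natCast, Nat.mod_eq_of_lt j.isLt]
  have h2 : (⟨((j.val : ZMod n) + (t : ZMod n)).val, ZMod.val_lt _⟩ : Fin n)
      = ⟨(j.val + t) % n, Nat.mod_lt _ j.pos⟩ := by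
    ext; exact val_add_nat j t
  rw [h1, h2]

lemma shortMrs_eq (t : ℕ) (x : Fin n → ZMod 2) :
    shortMrs n t x = Fsh n t (fun c => x ((finZModEquiv n).symm c)) := by
  unfold shortMrs Fsh
  refine Finset.sum_bij' (fun (j : Fin n) _ => (j.val : ZMod n))
    (fun (c : ZMod n) _ => (⟨c.val, ZMod.val_lt c⟩ : Fin n)) ?_ ?_ ?_ ?_ ?_
  · intro j hj
    simp only [Finset.mem_filter, Finset.mem_univ, true_and] at hj ⊢
    rw [ZMod.val_natCast, Nat.mod_eq_of_lt j.isLt]; exact hj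
  · intro c hc
    simp only [Finset.mem_filter, Finset.mem_univ, true_and] at hc ⊢
    exact hc
  · intro j _; ext; simp [ZMod.val_natCast, Nat.mod_eq_of_lt j.isLt]
  · intro c _; exact ZMod.natCast_rightInverse c
  · intro j _
    show x j * x ⟨(j.val + t) % n, Nat.mod_lt _ j.pos⟩ =
      x ⟨((j.val : ZMod n)).val, ZMod.val_lt _⟩ *
        x ⟨((j.val : ZMod n) + (t : ZMod n)).val, ZMod.val_lt _⟩
    have h1 : (⟨((j.val : ZMod n)).val, ZMod.val_lt _⟩ : Fin n) = j := by
      ext; simp [ZMod.val_natCast, Nat.mod_eq_of_lt j.isLt]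
    have h2 : (⟨((j.val : ZMod n) + (t : ZMod n)).val, ZMod.val_lt _⟩ : Fin n)
        = ⟨(j.val + t) % n, Nat.mod_lt _ j.pos⟩ := by
      ext; exact val_add_nat j t
    rw [h1, h2]

lemma zmod2_add_eq_zero_iff : ∀ a b : ZMod 2, a + b = 0 ↔ a = b := by decide

/-- Expansion of the full MRS function under translation. -/
lemma Ft_add (t : ℕ) (x c : ZMod n → ZMod 2) :
    Ft n t (x + c) = Ft n t x + dot x (Dt n t c) + Ft n t c := by
  unfold Ft
  have expand : ∀ j : ZMod n, (x + c) j * (x + c) (j + (t : ZMod n))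
      = x j * x (j + (t:ZMod n)) + (x j * c (j + (t:ZMod n)) + c j * x (j + (t:ZMod n)))
        + c j * c (j + (t:ZMod n)) := by
    intro j; simp only [Pi.add_apply]; ring
  rw [Finset.sum_congr rfl (fun j _ => expand j), Finset.sum_add_distrib,
    Finset.sum_add_distrib]
  congr 1
  congr 1
  have h2 : ∑ j : ZMod n, c j * x (j + (t:ZMod n))
      = ∑ j : ZMod n, c (j - (t:ZMod n)) * x j :=
    Fintype.sum_equiv (Equiv.addRight (t:ZMod n)) _ _ (fun j => by
      show c j * x (j + (t:ZMod n)) = c (j + (t:ZMod n) - (t:ZMod n)) * x (j + (t:ZMod n))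
      rw [add_sub_cancel_right])
  rw [Finset.sum_add_distrib, h2, ← Finset.sum_add_distrib]
  exact Finset.sum_congr rfl (fun j _ => by simp only [Dt]; ring)

end ZModLevel
end MrsAux

namespace MrsAux
open Finset

section ZModLevel2
variable {n : ℕ} [NeZero n]

lemma shift_nsmul {c : ZMod n → ZMod 2} {h : ZMod n} (H : ∀ j, c (j + h) = c j) :
    ∀ (q : ℕ) (j), c (j + q • h) = c j := by
  intro q
  induction q with
  | zero => intro j; simp
  | succ k ih =>
    intro j
    have : j + (k + 1) • h = (j + h) + k • h := by
      rw [succ_nsmul]; ring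
    rw [this, ih (j + h), H j]

lemma shift_neg {c : ZMod n → ZMod 2} {h : ZMod n} (H : ∀ j, c (j + h) = c j) :
    ∀ j, c (j - h) = c j := by
  intro j
  have := H (j - h)
  rw [sub_add_cancel] at this
  exact this.symm

lemma shift_zsmul {c : ZMod n → ZMod 2} {h : ZMod n} (H : ∀ j, c (j + h) = c j) :
    ∀ (z : ℤ) (j), c (j + z • h) = c j := by
  intro z j
  rcases z with q | q
  · rw [Int.ofNat_eq_coe, natCast_zsmul]; exact shift_nsmul H q j
  · have hz : (Int.negSucc q) • h = -(((q+1 : ℕ)) • h) := by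
      rw [Int.negSucc_eq, neg_zsmul]
      norm_cast
    rw [hz, ← sub_eq_add_neg]
    exact shift_neg (fun i => shift_nsmul H (q+1) i) j

lemma shift_gcd {c : ZMod n → ZMod 2} (a : ℕ) (H : ∀ j, c (j + (a : ZMod n)) = c j) :
    ∀ j, c (j + ((Nat.gcd a n : ℕ) : ZMod n)) = c j := by
  have key : ((Nat.gcd a n : ℕ) : ZMod n) = (Nat.gcdA a n) • (a : ZMod n) := by
    have h1 : ((Nat.gcd a n : ℤ) : ZMod n)
        = (((a : ℤ) * Nat.gcdA a n + (n : ℤ) * Nat.gcdB a n : ℤ) : ZMod n) := by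
      rw [← Nat.gcd_eq_gcd_ab]
    push_cast at h1
    rw [ZMod.natCast_self, zero_mul, add_zero] at h1
    rw [zsmul_eq_mul]
    push_cast
    rw [h1]; ring
  intro j
  rw [key]
  exact shift_zsmul H _ j

lemma shift_of_dvd {c : ZMod n → ZMod 2} {a b : ℕ} (hab : a ∣ b)
    (H : ∀ j, c (j + (a : ZMod n)) = c j) : ∀ j, c (j + (b : ZMod n)) = c j := by
  have key : ((b : ℕ) : ZMod n) = (b / a) • ((a : ℕ) : ZMod n) := by
    rw [nsmul_eq_mul]
    have : a * (b / a) = b := Nat.mul_div_cancel' hab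
    calc ((b : ℕ) : ZMod n) = ((a * (b / a) : ℕ) : ZMod n) := by rw [this]
    _ = _ := by push_cast; ring
  intro j
  rw [key]
  exact shift_nsmul H _ j

lemma dt_zero_iff (t : ℕ) (c : ZMod n → ZMod 2) :
    Dt n t c = 0 ↔ ∀ j, c (j + ((2 * t : ℕ) : ZMod n)) = c j := by
  have h2t : ∀ j : ZMod n, j + ((2 * t : ℕ) : ZMod n) = j + (t : ZMod n) + (t : ZMod n) := by
    intro j; push_cast; ring
  constructor
  · intro h j
    have h' : ∀ i : ZMod n, c (i + (t:ZMod n)) = c (i - (t:ZMod n)) := by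
      intro i
      have := congrFun h i
      simp only [Dt, Pi.zero_apply] at this
      exact (zmod2_add_eq_zero_iff _ _).mp this
    have := h' (j + (t : ZMod n))
    rw [add_sub_cancel_right] at this
    rw [h2t j, this]
  · intro H
    funext j
    simp only [Dt, Pi.zero_apply]
    rw [zmod2_add_eq_zero_iff]
    have := H (j - (t : ZMod n))
    rw [h2t, sub_add_cancel] at this
    rw [this]

lemma dt_zero_iff_gcd (t : ℕ) (c : ZMod n → ZMod 2) :
    Dt n t c = 0 ↔ ∀ j, c (j + ((Nat.gcd (2 * t) n : ℕ) : ZMod n)) = c j := by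
  rw [dt_zero_iff]
  constructor
  · intro H
    exact shift_gcd (2 * t) H
  · intro H
    exact shift_of_dvd (Nat.gcd_dvd_left (2*t) n) H

lemma card_per (g : ℕ) (hg : g ∣ n) (hgpos : 0 < g) :
    Nat.card {c : ZMod n → ZMod 2 // ∀ j, c (j + (g : ZMod n)) = c j} = 2 ^ g := by
  have hgle : g ≤ n := Nat.le_of_dvd (Nat.pos_of_ne_zero (NeZero.ne n)) hg
  have hmod : ∀ a : ℕ, (a + g % n) % n % g = a % g := by
    intro a
    have h0 : g % n % g = 0 := by
      rcases eq_or_lt_of_le hgle with h | h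
      · subst h; simp
      · rw [Nat.mod_eq_of_lt h, Nat.mod_self]
    rw [Nat.mod_mod_of_dvd _ hg, Nat.add_mod, h0, Nat.add_zero,
      Nat.mod_mod_of_dvd _ dvd_rfl]
  have E : {c : ZMod n → ZMod 2 // ∀ j, c (j + (g : ZMod n)) = c j} ≃ (Fin g → ZMod 2) :=
    { toFun := fun c r => c.1 ((r.val : ZMod n))
      invFun := fun v => ⟨fun j => v ⟨j.val % g, Nat.mod_lt _ hgpos⟩, by
        intro j
        have hv : (j + (g : ZMod n)).val % g = j.val % g := by
          rw [ZMod.val_add, ZMod.val_natCast]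
          exact hmod j.val
        simp only [hv]⟩
      left_inv := by
        intro c
        apply Subtype.ext
        funext j
        show c.1 (((j.val % g : ℕ) : ZMod n)) = c.1 j
        have hj : ((j.val % g + g * (j.val / g) : ℕ) : ZMod n) = j := by
          rw [Nat.mod_add_div]
          exact ZMod.natCast_rightInverse j
        have hsum : ((j.val % g : ℕ) : ZMod n) + (j.val / g) • ((g:ℕ) : ZMod n)
            = ((j.val % g + g * (j.val / g) : ℕ) : ZMod n) := by
          push_cast [nsmul_eq_mul]; ring
        have hdec : j = ((j.val % g : ℕ) : ZMod n) + (j.val / g) • ((g:ℕ) : ZMod n) :=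
          (hsum.trans hj).symm
        conv_rhs => rw [hdec]
        rw [shift_nsmul c.2 (j.val / g) _]
      right_inv := by
        intro v
        funext r
        show v ⟨((r.val : ZMod n)).val % g, _⟩ = v r
        congr 1
        ext
        show ((r.val : ZMod n)).val % g = r.val
        rw [ZMod.val_natCast, Nat.mod_eq_of_lt (lt_of_lt_of_le r.isLt hgle),
          Nat.mod_eq_of_lt r.isLt] }
  rw [Nat.card_congr E, Nat.card_eq_fintype_card, Fintype.card_fun]
  simp

lemma card_dvd_val (d : ℕ) (hd : d ∣ n) (hdpos : 0 < d) :
    (Finset.univ.filter (fun j : ZMod n => d ∣ j.val)).card = n / d := by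
  have hn : 0 < n := Nat.pos_of_ne_zero (NeZero.ne n)
  rw [show n / d = (Finset.univ : Finset (Fin (n / d))).card by simp]
  refine Finset.card_bij' (fun (j : ZMod n) hj => (⟨j.val / d, ?_⟩ : Fin (n/d)))
    (fun (i : Fin (n/d)) _ => ((d * i.val : ℕ) : ZMod n)) ?_ ?_ ?_ ?_
  · exact Nat.div_lt_div_of_lt_of_dvd hd (ZMod.val_lt j)
  · intro j hj; exact Finset.mem_univ _
  · intro i _
    simp only [Finset.mem_filter, Finset.mem_univ, true_and]
    have hlt : d * i.val < n := by
      have h1 : d * (i.val + 1) ≤ d * (n / d) := Nat.mul_le_mul_left d i.isLt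
      have h2 : d * (n / d) = n := Nat.mul_div_cancel' hd
      nlinarith [hdpos]
    rw [ZMod.val_natCast, Nat.mod_eq_of_lt hlt]
    exact ⟨i.val, rfl⟩
  · intro j hj
    simp only [Finset.mem_filter, Finset.mem_univ, true_and] at hj
    show ((d * (j.val / d) : ℕ) : ZMod n) = j
    rw [Nat.mul_div_cancel' hj]
    exact ZMod.natCast_rightInverse j
  · intro i _
    ext
    show (((d * i.val : ℕ) : ZMod n)).val / d = i.val
    have hlt : d * i.val < n := by
      have h1 : d * (i.val + 1) ≤ d * (n / d) := Nat.mul_le_mul_left d i.isLt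
      have h2 : d * (n / d) = n := Nat.mul_div_cancel' hd
      nlinarith [hdpos]
    rw [ZMod.val_natCast, Nat.mod_eq_of_lt hlt, Nat.mul_div_cancel_left _ hdpos]

end ZModLevel2
end MrsAux

namespace MrsAux
open Finset

section Values
variable {n : ℕ} [NeZero n]

lemma ft_zero (t : ℕ) : Ft n t 0 = 0 := by simp [Ft]
lemma fsh_zero (t : ℕ) : Fsh n t 0 = 0 := by simp [Fsh]

lemma add_t_add_t {t : ℕ} (hn2 : n = 2 * t) (j : ZMod n) :
    j + (t : ZMod n) + (t : ZMod n) = j := by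
  have h0 : ((2 * t : ℕ) : ZMod n) = 0 := by rw [← hn2]; exact ZMod.natCast_self n
  push_cast at h0
  rw [add_assoc]
  rw [show (t : ZMod n) + (t : ZMod n) = 0 by rw [← h0]; ring, add_zero]

/-- Expansion of the short MRS function under translation. -/
lemma Fsh_add {t : ℕ} (hn2 : n = 2 * t) (ht : 0 < t) (x c : ZMod n → ZMod 2) :
    Fsh n t (x + c) = Fsh n t x + dot x (fun j => c (j + (t : ZMod n))) + Fsh n t c := by
  have htn : t < n := by omega
  have invol : ∀ j : ZMod n, j + (t:ZMod n) + (t:ZMod n) = j := add_t_add_t hn2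
  have val_lo : ∀ j : ZMod n, j.val < t → (j + (t:ZMod n)).val = j.val + t := by
    intro j hj
    rw [ZMod.val_add, ZMod.val_natCast, Nat.mod_eq_of_lt htn, Nat.mod_eq_of_lt (by omega)]
  have val_hi : ∀ j : ZMod n, ¬ j.val < t → (j + (t:ZMod n)).val = j.val - t := by
    intro j hj
    have hjn := ZMod.val_lt j
    rw [ZMod.val_add, ZMod.val_natCast, Nat.mod_eq_of_lt htn,
      Nat.mod_eq_sub_mod (by omega), Nat.mod_eq_of_lt (by omega)]
    omega
  unfold Fsh
  have expand : ∀ j : ZMod n, (x + c) j * (x + c) (j + (t:ZMod n))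
      = x j * x (j + (t:ZMod n)) + (x j * c (j + (t:ZMod n)) + c j * x (j + (t:ZMod n)))
        + c j * c (j + (t:ZMod n)) := fun j => by simp only [Pi.add_apply]; ring
  rw [Finset.sum_congr rfl (fun j _ => expand j), Finset.sum_add_distrib,
    Finset.sum_add_distrib]
  congr 1
  congr 1
  rw [Finset.sum_add_distrib]
  have flip : ∑ j ∈ univ.filter (fun j : ZMod n => j.val < t), c j * x (j + (t:ZMod n))
      = ∑ j ∈ univ.filter (fun j : ZMod n => ¬ j.val < t), x j * c (j + (t:ZMod n)) := by
    refine Finset.sum_bij' (fun j _ => j + (t:ZMod n)) (fun j _ => j + (t:ZMod n))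
      ?_ ?_ ?_ ?_ ?_
    · intro j hj
      simp only [Finset.mem_filter, Finset.mem_univ, true_and] at hj ⊢
      rw [val_lo j hj]; omega
    · intro j hj
      simp only [Finset.mem_filter, Finset.mem_univ, true_and] at hj ⊢
      have hjn := ZMod.val_lt j
      rw [val_hi j hj]; omega
    · intro j _; exact invol j
    · intro j _; exact invol j
    · intro j _
      show c j * x (j + (t:ZMod n)) = x (j + (t:ZMod n)) * c (j + (t:ZMod n) + (t:ZMod n))
      rw [invol j, mul_comm]
  rw [flip, Finset.sum_filter_add_sum_filter_not]
  rfl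

lemma linStruct_ft_iff (t : ℕ) (c : ZMod n → ZMod 2) :
    LinStruct (Ft n t) c ↔ Dt n t c = 0 := by
  constructor
  · rintro ⟨ε, hε⟩
    have h0 := hε 0
    rw [zero_add, ft_zero, zero_add] at h0
    have hdot : ∀ x, dot x (Dt n t c) = 0 := by
      intro x
      have h1 := hε x
      rw [Ft_add, h0] at h1
      linear_combination h1
    funext j
    have := hdot (Pi.single j 1)
    rw [dot_single] at this
    exact this
  · intro h
    exact ⟨Ft n t c, fun x => by rw [Ft_add, h, dot_zero_right, add_zero]⟩

lemma linStruct_fsh_iff {t : ℕ} (hn2 : n = 2 * t) (ht : 0 < t) (c : ZMod n → ZMod 2) :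
    LinStruct (Fsh n t) c ↔ (fun j : ZMod n => c (j + (t : ZMod n))) = 0 := by
  constructor
  · rintro ⟨ε, hε⟩
    have h0 := hε 0
    rw [zero_add, fsh_zero, zero_add] at h0
    have hdot : ∀ x, dot x (fun j : ZMod n => c (j + (t:ZMod n))) = 0 := by
      intro x
      have h1 := hε x
      rw [Fsh_add hn2 ht, h0] at h1
      linear_combination h1
    funext j
    have := hdot (Pi.single j 1)
    rw [dot_single] at this
    exact this
  · intro h
    exact ⟨Fsh n t c, fun x => by rw [Fsh_add hn2 ht, h, dot_zero_right, add_zero]⟩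

lemma linv_ft (t : ℕ) : Linv (Ft n t) = 2 ^ Nat.gcd (2 * t) n := by
  unfold Linv
  rw [Nat.card_congr (Equiv.subtypeEquivRight (fun c =>
    (linStruct_ft_iff t c).trans (dt_zero_iff_gcd t c)))]
  exact card_per _ (Nat.gcd_dvd_right _ _)
    (Nat.gcd_pos_of_pos_right _ (Nat.pos_of_ne_zero (NeZero.ne n)))

lemma linv_fsh {t : ℕ} (hn2 : n = 2 * t) (ht : 0 < t) : Linv (Fsh n t) = 1 := by
  unfold Linv
  have iff1 : ∀ c : ZMod n → ZMod 2, LinStruct (Fsh n t) c ↔ c = 0 := by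
    intro c
    rw [linStruct_fsh_iff hn2 ht]
    constructor
    · intro h
      funext i
      have := congrFun h (i + (t:ZMod n))
      rw [add_t_add_t hn2 i] at this
      exact this
    · rintro rfl; funext j; simp
  rw [Nat.card_congr (Equiv.subtypeEquivRight iff1)]
  haveI : Unique {c : ZMod n → ZMod 2 // c = 0} :=
    ⟨⟨0, rfl⟩, fun a => Subtype.ext (by rw [a.2]; rfl)⟩
  exact Nat.card_unique

lemma sinv_ft_odd {t : ℕ} (ht : 0 < t) (hm : (n / Nat.gcd t n) % 2 = 1) :
    Sinv (Ft n t) = 0 := by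
  set d := Nat.gcd t n with hd
  have hdt : d ∣ t := Nat.gcd_dvd_left t n
  have hdn : d ∣ n := Nat.gcd_dvd_right t n
  have hdpos : 0 < d := Nat.gcd_pos_of_pos_left n ht
  set c : ZMod n → ZMod 2 := fun j => if d ∣ j.val then 1 else 0 with hc
  have hper : ∀ j : ZMod n, c (j + (t : ZMod n)) = c j := by
    intro j
    have hdtm : d ∣ t % n := (Nat.dvd_mod_iff hdn).mpr hdt
    have hiff : d ∣ (j + (t:ZMod n)).val ↔ d ∣ j.val := by
      rw [ZMod.val_add, ZMod.val_natCast, Nat.dvd_mod_iff hdn]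
      constructor
      · intro h
        have := Nat.dvd_sub h hdtm
        rwa [Nat.add_sub_cancel] at this
      · intro h; exact Dvd.dvd.add h hdtm
    simp only [hc]
    rw [if_congr hiff rfl rfl]
  have hDt : Dt n t c = 0 := by
    funext j
    simp only [Dt, Pi.zero_apply]
    rw [hper j, shift_neg hper j, CharTwo.add_self_eq_zero]
  have hFtc : Ft n t c = 1 := by
    unfold Ft
    have hsq : ∀ j : ZMod n, c j * c (j + (t:ZMod n)) = c j := by
      intro j
      rw [hper j]
      simp only [hc]
      split_ifs <;> norm_num
    rw [Finset.sum_congr rfl (fun j _ => hsq j)]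
    simp only [hc]
    rw [Finset.sum_boole, card_dvd_val d hdn hdpos]
    obtain ⟨k, hk⟩ : ∃ k, n / d = 2 * k + 1 := ⟨n/d/2, by omega⟩
    rw [hk]
    push_cast
    rw [show ((2:ZMod 2)) = 0 from rfl]
    ring
  exact sum_chi_zero (Ft n t) c (fun x => by
    rw [Ft_add, hDt, dot_zero_right, add_zero, hFtc])

end Values
end MrsAux

namespace MrsAux
open Finset

section Even
variable {n : ℕ} [NeZero n]

lemma gcd2t_eq {t : ℕ} (ht : 0 < t) (hm : (n / Nat.gcd t n) % 2 = 0) :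
    Nat.gcd (2 * t) n = 2 * Nat.gcd t n := by
  set d := Nat.gcd t n with hd
  have hdt : d ∣ t := Nat.gcd_dvd_left t n
  have hdn : d ∣ n := Nat.gcd_dvd_right t n
  have hdpos : 0 < d := Nat.gcd_pos_of_pos_left n ht
  set u := t / d with hu
  set m := n / d with hmdef
  have hdu : d * u = t := Nat.mul_div_cancel' hdt
  have hdm : d * m = n := Nat.mul_div_cancel' hdn
  have hco : Nat.Coprime u m := Nat.coprime_div_gcd_div_gcd hdpos
  have h2m : 2 ∣ m := ⟨m / 2, by omega⟩
  calc Nat.gcd (2 * t) n = Nat.gcd (d * (2 * u)) (d * m) := by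
        rw [show d * (2 * u) = 2 * (d * u) by ring, hdu, hdm]
    _ = d * Nat.gcd (2 * u) m := Nat.gcd_mul_left d (2*u) m
    _ = d * Nat.gcd 2 m := by rw [Nat.Coprime.gcd_mul_right_cancel 2 hco]
    _ = d * 2 := by rw [Nat.gcd_eq_left h2m]
    _ = 2 * d := by ring

lemma u_odd {t : ℕ} (ht : 0 < t) (hm : (n / Nat.gcd t n) % 2 = 0) :
    (t / Nat.gcd t n) % 2 = 1 := by
  have hdpos : 0 < Nat.gcd t n := Nat.gcd_pos_of_pos_left n ht
  have hco : Nat.Coprime (t / Nat.gcd t n) (n / Nat.gcd t n) :=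
    Nat.coprime_div_gcd_div_gcd hdpos
  by_contra h
  have h2u : 2 ∣ (t / Nat.gcd t n) := by omega
  have h2m : 2 ∣ (n / Nat.gcd t n) := by omega
  have := Nat.Coprime.eq_one_of_dvd (Nat.Coprime.coprime_dvd_left h2u hco) h2m
  omega

lemma val_add_d {d m : ℕ} (hdpos : 0 < d) (hdm : d * m = n) (hm2 : m % 2 = 0)
    (j : ZMod n) (h : (j.val / d) % 2 = 0) :
    (j + ((d:ℕ) : ZMod n)).val = j.val + d ∧ ((j.val + d) / d) % 2 = 1 := by
  have hvlt : j.val < n := ZMod.val_lt j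
  have hvlt2 : j.val < d * m := by rw [hdm]; exact hvlt
  have hq := Nat.div_add_mod j.val d
  have hr : j.val % d < d := Nat.mod_lt _ hdpos
  have hqm : j.val / d < m := Nat.div_lt_of_lt_mul hvlt2
  have hmpos : 0 < m := by
    rcases Nat.eq_zero_or_pos m with h0 | h0
    · exfalso; rw [h0, Nat.mul_zero] at hdm; exact (NeZero.ne n) hdm.symm
    · exact h0
  have hm1 : 1 < m := by omega
  have hdlt : d < n := by
    have h2 : d * 2 ≤ d * m := Nat.mul_le_mul_left d (by omega)
    linarith [hdm, hdpos]
  have hqle : j.val / d + 2 ≤ m := by omega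
  have hlt : j.val + d < n := by
    have h1 : d * (j.val / d + 2) ≤ d * m := Nat.mul_le_mul_left d hqle
    have h2 : d * (j.val / d + 2) = d * (j.val / d) + (d + d) := by ring
    linarith [hq, hr, hdm]
  constructor
  · rw [ZMod.val_add, ZMod.val_natCast, Nat.mod_eq_of_lt hdlt, Nat.mod_eq_of_lt hlt]
  · rw [Nat.add_div_right _ hdpos]
    omega

lemma val_sub_d {d m : ℕ} (hdpos : 0 < d) (hdm : d * m = n)
    (j : ZMod n) (h : (j.val / d) % 2 = 1) :
    j - ((d:ℕ) : ZMod n) = ((j.val - d : ℕ) : ZMod n)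
    ∧ ((j.val - d : ℕ) : ZMod n).val = j.val - d
    ∧ ((j.val - d) / d) % 2 = 0 ∧ d ≤ j.val := by
  have hvlt : j.val < n := ZMod.val_lt j
  have hq := Nat.div_add_mod j.val d
  have hr : j.val % d < d := Nat.mod_lt _ hdpos
  have hq1 : 1 ≤ j.val / d := by
    rcases Nat.eq_zero_or_pos (j.val / d) with h0 | h0
    · rw [h0] at h; simp at h
    · exact h0
  have hdle : d ≤ j.val := by
    have h1 : d * 1 ≤ d * (j.val / d) := Nat.mul_le_mul_left d hq1
    rw [mul_one] at h1
    exact le_trans h1 (le_trans (Nat.le_add_right _ _) (le_of_eq hq))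
  have hcast : j - ((d:ℕ) : ZMod n) = ((j.val - d : ℕ) : ZMod n) := by
    conv_rhs => rw [Nat.cast_sub hdle]
    rw [ZMod.natCast_rightInverse j]
  have hval : ((j.val - d : ℕ) : ZMod n).val = j.val - d := by
    rw [ZMod.val_natCast, Nat.mod_eq_of_lt (by omega)]
  have hdivsub : (j.val - d) / d = j.val / d - 1 := by
    have h5 : d * (j.val / d) = d * (j.val / d - 1) + d := by
      have hx : j.val / d - 1 + 1 = j.val / d := by omega
      calc d * (j.val / d) = d * ((j.val / d - 1) + 1) := by rw [hx]
      _ = d * (j.val / d - 1) + d := by ring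
    have hsub : j.val - d = d * (j.val / d - 1) + j.val % d := by
      rw [Nat.sub_eq_iff_eq_add hdle]
      linarith [hq, h5]
    rw [hsub, Nat.mul_add_div hdpos, Nat.div_eq_of_lt hr, Nat.add_zero]
  refine ⟨hcast, hval, ?_, hdle⟩
  rw [hdivsub]
  omega

lemma ft_radical_zero {t : ℕ} (ht : 0 < t) (htn : t < n)
    (hm : (n / Nat.gcd t n) % 2 = 0) (c : ZMod n → ZMod 2) (hDc : Dt n t c = 0) :
    Ft n t c = 0 := by
  set d := Nat.gcd t n with hd
  have hdt : d ∣ t := Nat.gcd_dvd_left t n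
  have hdn : d ∣ n := Nat.gcd_dvd_right t n
  have hdpos : 0 < d := Nat.gcd_pos_of_pos_left n ht
  obtain ⟨u, hdu, huodd⟩ : ∃ u, d * u = t ∧ u % 2 = 1 :=
    ⟨t / d, Nat.mul_div_cancel' hdt, u_odd ht hm⟩
  obtain ⟨m, hdm, hm2⟩ : ∃ m, d * m = n ∧ m % 2 = 0 :=
    ⟨n / d, Nat.mul_div_cancel' hdn, hm⟩
  have hper2t : ∀ j, c (j + ((2 * t : ℕ) : ZMod n)) = c j := (dt_zero_iff t c).mp hDc
  have hpergcd : ∀ j, c (j + ((Nat.gcd (2*t) n : ℕ) : ZMod n)) = c j :=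
    shift_gcd (2*t) hper2t
  have hg2d : Nat.gcd (2*t) n = 2 * d := gcd2t_eq ht hm
  have hper2d : ∀ j, c (j + ((2 * d : ℕ) : ZMod n)) = c j := by
    rw [← hg2d]; exact hpergcd
  have htsplit : (t : ZMod n) = (d : ZMod n) + ((u-1)/2) • ((2*d : ℕ) : ZMod n) := by
    have hnat : t = d + 2*d*((u-1)/2) := by
      have h1 : 2*((u-1)/2) = u - 1 := by omega
      have h2 : d + 2*d*((u-1)/2) = d + d*(2*((u-1)/2)) := by ring
      rw [h2, h1]
      have h3 : d + d * (u - 1) = d * (1 + (u-1)) := by ring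
      rw [h3, show 1 + (u - 1) = u by omega, hdu]
    calc (t : ZMod n) = ((d + 2*d*((u-1)/2) : ℕ) : ZMod n) := by rw [← hnat]
    _ = _ := by push_cast [nsmul_eq_mul]; ring
  have hshift_td : ∀ j : ZMod n, c (j + (t:ZMod n)) = c (j + (d:ZMod n)) := by
    intro j
    rw [htsplit, ← add_assoc]
    exact shift_nsmul hper2d ((u-1)/2) (j + (d:ZMod n))
  set b : ZMod n → ZMod 2 := fun j => c j * c (j + (d : ZMod n)) with hb
  have hjdd : ∀ j : ZMod n, j + (d:ZMod n) + (d:ZMod n) = j + ((2*d : ℕ) : ZMod n) := by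
    intro j; push_cast; ring
  have hb_up : ∀ j : ZMod n, b (j + (d:ZMod n)) = b j := by
    intro j
    show c (j + (d:ZMod n)) * c (j + (d:ZMod n) + (d:ZMod n)) = c j * c (j + (d:ZMod n))
    rw [hjdd, hper2d j, mul_comm]
  have hb_down : ∀ j : ZMod n, b (j - (d:ZMod n)) = b j := by
    intro j
    have := hb_up (j - (d:ZMod n))
    rw [sub_add_cancel] at this
    exact this.symm
  have hdz : ((d : ℕ) : ZMod n) ≠ 0 := by
    intro h
    rw [ZMod.natCast_eq_zero_iff] at h
    have := Nat.le_of_dvd hdpos h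
    have hdlt : d < n := lt_of_le_of_lt (Nat.le_of_dvd ht hdt) htn
    omega
  have hFt : Ft n t c = ∑ j : ZMod n, b j := by
    unfold Ft
    exact Finset.sum_congr rfl (fun j _ => by rw [hshift_td j])
  rw [hFt]
  refine Finset.sum_involution
    (fun j _ => if (j.val / d) % 2 = 0 then j + ((d:ℕ) : ZMod n) else j - ((d:ℕ) : ZMod n))
    (fun j _ => ?_) (fun j _ _ => ?_) (fun j _ => Finset.mem_univ _) (fun j _ => ?_)
  · split_ifs with h
    · rw [hb_up j, CharTwo.add_self_eq_zero]
    · rw [hb_down j, CharTwo.add_self_eq_zero]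
  · split_ifs with h
    · intro heq
      apply hdz
      have h2 : j + ((d:ℕ) : ZMod n) = j + 0 := by rw [add_zero]; exact heq
      exact add_left_cancel h2
    · intro heq
      exact hdz (sub_eq_self.mp heq)
  · by_cases h : (j.val / d) % 2 = 0
    · rw [if_pos h]
      obtain ⟨hval, hpar⟩ := val_add_d hdpos hdm hm2 j h
      rw [if_neg (by rw [hval]; omega)]
      exact add_sub_cancel_right j _
    · rw [if_neg h]
      obtain ⟨hcast, hval, hpar, hdle⟩ := val_sub_d hdpos hdm j (by omega)
      rw [if_pos (by rw [hcast, hval]; exact hpar)]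
      exact sub_add_cancel j _

lemma sinv_ft_even_ne {t : ℕ} (ht : 0 < t) (htn : t < n)
    (hm : (n / Nat.gcd t n) % 2 = 0) : Sinv (Ft n t) ≠ 0 := by
  have hsq := sinv_mul_self (Ft n t) (Dt n t) (Ft_add t)
  have hpos : (0:ℤ) < ∑ c : ZMod n → ZMod 2,
      (if Dt n t c = 0 then χ (Ft n t c) * 2 ^ Fintype.card (ZMod n) else 0) := by
    have heq : ∀ c : ZMod n → ZMod 2,
        (if Dt n t c = 0 then χ (Ft n t c) * 2 ^ Fintype.card (ZMod n) else 0)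
        = (if Dt n t c = 0 then (2:ℤ) ^ Fintype.card (ZMod n) else 0) := by
      intro c
      split_ifs with h
      · rw [ft_radical_zero ht htn hm c h, chi_zero, one_mul]
      · rfl
    rw [Finset.sum_congr rfl (fun c _ => heq c)]
    apply Finset.sum_pos'
    · intro c _
      split_ifs
      · positivity
      · exact le_refl 0
    · refine ⟨0, Finset.mem_univ _, ?_⟩
      rw [if_pos (by funext j; simp [Dt])]
      positivity
  intro h0
  rw [h0, mul_zero] at hsq
  omega

lemma sinv_fsh_ne {t : ℕ} (hn2 : n = 2 * t) (ht : 0 < t) : Sinv (Fsh n t) ≠ 0 := by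
  have hsq := sinv_mul_self (Fsh n t) (fun c (j : ZMod n) => c (j + (t:ZMod n)))
    (fun x c => Fsh_add hn2 ht x c)
  have hiff : ∀ c : ZMod n → ZMod 2,
      ((fun j : ZMod n => c (j + (t:ZMod n))) = 0) ↔ c = 0 := by
    intro c
    constructor
    · intro h
      funext i
      have := congrFun h (i + (t:ZMod n))
      rw [add_t_add_t hn2 i] at this
      exact this
    · rintro rfl; funext j; simp
  have hterm : ∀ c : ZMod n → ZMod 2,
      (if (fun j : ZMod n => c (j + (t:ZMod n))) = 0
        then χ (Fsh n t c) * 2 ^ Fintype.card (ZMod n) else 0)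
      = (if c = 0 then (2:ℤ) ^ Fintype.card (ZMod n) else 0) := by
    intro c
    by_cases hc : c = 0
    · subst hc
      rw [if_pos (by funext j; simp), if_pos rfl, fsh_zero, chi_zero, one_mul]
    · rw [if_neg (fun h => hc ((hiff c).mp h)), if_neg hc]
  rw [Finset.sum_congr rfl (fun c _ => hterm c)] at hsq
  rw [Finset.sum_ite_eq' Finset.univ (0 : ZMod n → ZMod 2)
    (fun _ => (2:ℤ) ^ Fintype.card (ZMod n)), if_pos (Finset.mem_univ _)] at hsq
  intro h0
  rw [h0, mul_zero] at hsq
  have : (0:ℤ) < 2 ^ Fintype.card (ZMod n) := by positivity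
  omega


end Even
end MrsAux

namespace MrsAux
open Finset

section Construction
variable {n : ℕ} [NeZero n]

def permMat (σ : Equiv.Perm (Fin n)) : Matrix (Fin n) (Fin n) (ZMod 2) :=
  Matrix.of fun i j => if σ i = j then 1 else 0

lemma permMat_mulVec (σ : Equiv.Perm (Fin n)) (x : Fin n → ZMod 2) :
    (permMat σ).mulVec x = fun i => x (σ i) := by
  funext i
  show ∑ j, (if σ i = j then (1:ZMod 2) else 0) * x j = x (σ i)
  rw [Finset.sum_eq_single (σ i)]
  · simp
  · intro b _ hb
    rw [if_neg (fun h => hb h.symm), zero_mul]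
  · intro h; exact absurd (Finset.mem_univ _) h

lemma permMat_isUnit (σ : Equiv.Perm (Fin n)) : IsUnit (permMat σ) := by
  have hmul : permMat σ * permMat σ.symm = 1 := by
    ext i k
    rw [Matrix.mul_apply]
    show (∑ j, (if σ i = j then (1:ZMod 2) else 0) * (if σ.symm j = k then 1 else 0)) = _
    rw [Finset.sum_eq_single (σ i)]
    · simp [Matrix.one_apply, Equiv.symm_apply_apply, eq_comm]
    · intro b _ hb
      rw [if_neg (fun h => hb h.symm), zero_mul]
    · intro h; exact absurd (Finset.mem_univ _) h
  rw [Matrix.isUnit_iff_isUnit_det]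
  have hdet := congrArg Matrix.det hmul
  rw [Matrix.det_mul, Matrix.det_one] at hdet
  exact IsUnit.of_mul_eq_one _ hdet

lemma affEquiv_rsFun_gcd {t : ℕ} (ht : 1 ≤ t) (ht2 : 2 * t ≤ n) (hne : 2 * t ≠ n) :
    AffEquiv n (rsFun n t) (rsFun n (Nat.gcd t n)) := by
  set d := Nat.gcd t n with hd
  have hdt : d ∣ t := Nat.gcd_dvd_left t n
  have hdn : d ∣ n := Nat.gcd_dvd_right t n
  have hdpos : 0 < d := Nat.gcd_pos_of_pos_left n ht
  have hdle : d ≤ t := Nat.le_of_dvd ht hdt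
  have h2d : 2 * d ≠ n := by omega
  have hmn : (n / d) ∣ n := Nat.div_dvd_of_dvd hdn
  have hndpos : 0 < n / d := Nat.div_pos (Nat.le_of_dvd (by omega) hdn)
    hdpos
  haveI : NeZero (n / d) := ⟨by omega⟩
  have hco : Nat.Coprime (t / d) (n / d) := Nat.coprime_div_gcd_div_gcd hdpos
  obtain ⟨w, hw⟩ := ZMod.unitsMap_surjective hmn (ZMod.unitOfCoprime (t / d) hco)
  set W : ZMod n := (w : ZMod n) with hW
  have hWd : W * ((d : ℕ) : ZMod n) = ((t : ℕ) : ZMod n) := by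
    have h1 : ((W.val : ℕ) : ZMod (n/d)) = ((t / d : ℕ) : ZMod (n/d)) := by
      have h2 := congrArg (Units.val) hw
      rw [ZMod.unitsMap_def, Units.coe_map] at h2
      rw [ZMod.natCast_val]
      rw [ZMod.coe_unitOfCoprime] at h2
      exact h2
    have h3 : W.val ≡ t / d [MOD n / d] := (ZMod.natCast_eq_natCast_iff _ _ _).mp h1
    have h4 : W.val * d ≡ (t / d) * d [MOD (n / d) * d] := Nat.ModEq.mul_right' d h3
    rw [Nat.div_mul_cancel hdn, Nat.div_mul_cancel hdt] at h4
    have h5 : ((W.val * d : ℕ) : ZMod n) = ((t : ℕ) : ZMod n) :=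
      (ZMod.natCast_eq_natCast_iff _ _ _).mpr h4
    rw [Nat.cast_mul, ZMod.natCast_rightInverse W] at h5
    exact h5
  have hWinv : ((w⁻¹ : (ZMod n)ˣ) : ZMod n) * W = 1 := by rw [hW]; exact w.inv_mul
  have hmulW_bij : Function.Bijective (fun i : ZMod n => W * i) := by
    constructor
    · intro a b hab
      dsimp only at hab
      have h2 := congrArg (fun z => ((w⁻¹ : (ZMod n)ˣ) : ZMod n) * z) hab
      rwa [← mul_assoc, ← mul_assoc, hWinv, one_mul, one_mul] at h2
    · intro y
      refine ⟨((w⁻¹ : (ZMod n)ˣ) : ZMod n) * y, ?_⟩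
      dsimp only
      rw [← mul_assoc, hW, w.mul_inv, one_mul]
  have hFt : ∀ x : ZMod n → ZMod 2, Ft n t x = Ft n d (fun i => x (W * i)) := by
    intro x
    have hsum := Fintype.sum_bijective (fun i : ZMod n => W * i) hmulW_bij
      (fun i => x (W * i) * x (W * (i + ((d:ℕ) : ZMod n))))
      (fun j => x j * x (j + ((t:ℕ) : ZMod n)))
      (fun i => by
        rw [mul_add, hWd])
    unfold Ft
    exact hsum.symm
  set E := finZModEquiv n with hE
  set σ : Equiv.Perm (Fin n) :=
    E.trans ((Equiv.ofBijective _ hmulW_bij).trans E.symm) with hσ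
  refine ⟨permMat σ, 0, permMat_isUnit σ, fun x => ?_⟩
  rw [add_zero, permMat_mulVec]
  show rsFun n t x = rsFun n d (fun i => x (σ i))
  simp only [rsFun]
  rw [if_neg hne, if_neg h2d]
  rw [mrs_eq t x, mrs_eq d (fun i => x (σ i)), hFt]
  congr 1
  funext c
  show x (E.symm (W * c)) = x (σ (E.symm c))
  congr 1
  rw [hσ]
  simp only [Equiv.trans_apply, Equiv.ofBijective_apply, Equiv.apply_symm_apply]

end Construction
end MrsAux

namespace MrsAux
open Finset

section Classify
variable {n : ℕ} [NeZero n]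

noncomputable def ZF (n t : ℕ) [NeZero n] : (ZMod n → ZMod 2) → ZMod 2 :=
  if 2 * t = n then Fsh n t else Ft n t

lemma rsFun_transport (t : ℕ) (x : Fin n → ZMod 2) :
    rsFun n t x = ZF n t (fun c => x ((finZModEquiv n).symm c)) := by
  unfold rsFun ZF
  split_ifs with h
  · exact shortMrs_eq t x
  · exact mrs_eq t x

lemma sinv_rsFun (t : ℕ) : Sinv (rsFun n t) = Sinv (ZF n t) := by
  rw [show rsFun n t = (fun x : Fin n → ZMod 2 =>
    ZF n t (fun c => x ((finZModEquiv n).symm c))) from funext (rsFun_transport t)]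
  exact sinv_reindex (finZModEquiv n) (ZF n t)

lemma linv_rsFun (t : ℕ) : Linv (rsFun n t) = Linv (ZF n t) := by
  rw [show rsFun n t = (fun x : Fin n → ZMod 2 =>
    ZF n t (fun c => x ((finZModEquiv n).symm c))) from funext (rsFun_transport t)]
  exact linv_reindex (finZModEquiv n) (ZF n t)

lemma gcd2t_odd {t : ℕ} (ht : 0 < t) (hm : (n / Nat.gcd t n) % 2 = 1) :
    Nat.gcd (2 * t) n = Nat.gcd t n := by
  set d := Nat.gcd t n with hd
  have hdt : d ∣ t := Nat.gcd_dvd_left t n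
  have hdn : d ∣ n := Nat.gcd_dvd_right t n
  have hdpos : 0 < d := Nat.gcd_pos_of_pos_left n ht
  set u := t / d with hu
  set m := n / d with hmdef
  have hdu : d * u = t := Nat.mul_div_cancel' hdt
  have hdm : d * m = n := Nat.mul_div_cancel' hdn
  have hco : Nat.Coprime u m := Nat.coprime_div_gcd_div_gcd hdpos
  have hmodd : Odd m := Nat.odd_iff.mpr hm
  have h2m : Nat.Coprime 2 m := Nat.coprime_two_left.mpr hmodd
  calc Nat.gcd (2 * t) n = Nat.gcd (d * (2 * u)) (d * m) := by
        rw [show d * (2 * u) = 2 * (d * u) by ring, hdu, hdm]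
    _ = d * Nat.gcd (2 * u) m := Nat.gcd_mul_left d (2*u) m
    _ = d * Nat.gcd 2 m := by rw [Nat.Coprime.gcd_mul_right_cancel 2 hco]
    _ = d * 1 := by rw [h2m]
    _ = d := by ring

lemma gcd_eq_of_affEquiv {t s : ℕ} (ht1 : 1 ≤ t) (ht2 : 2 * t ≤ n)
    (hs1 : 1 ≤ s) (hs2 : 2 * s ≤ n)
    (h : AffEquiv n (rsFun n t) (rsFun n s)) : Nat.gcd t n = Nat.gcd s n := by
  have hSinv : Sinv (ZF n t) = Sinv (ZF n s) := by
    rw [← sinv_rsFun, ← sinv_rsFun]; exact sinv_eq_of_affEquiv h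
  have hLinv : Linv (ZF n t) = Linv (ZF n s) := by
    rw [← linv_rsFun, ← linv_rsFun]; exact linv_eq_of_affEquiv h
  by_cases hT : 2 * t = n <;> by_cases hS2 : 2 * s = n
  · rw [show t = s by omega]
  · exfalso
    have h1 : Linv (ZF n t) = 1 := by
      rw [ZF, if_pos hT]; exact linv_fsh hT.symm ht1
    have h2 : Linv (ZF n s) = 2 ^ Nat.gcd (2*s) n := by
      rw [ZF, if_neg hS2]; exact linv_ft s
    rw [h1, h2] at hLinv
    have hpos : 0 < Nat.gcd (2*s) n :=
      Nat.gcd_pos_of_pos_right _ (Nat.pos_of_ne_zero (NeZero.ne n))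
    have := Nat.one_lt_pow (by omega : Nat.gcd (2*s) n ≠ 0) (by omega : 1 < 2)
    omega
  · exfalso
    have h1 : Linv (ZF n s) = 1 := by
      rw [ZF, if_pos hS2]; exact linv_fsh hS2.symm hs1
    have h2 : Linv (ZF n t) = 2 ^ Nat.gcd (2*t) n := by
      rw [ZF, if_neg hT]; exact linv_ft t
    rw [h1, h2] at hLinv
    have hpos : 0 < Nat.gcd (2*t) n :=
      Nat.gcd_pos_of_pos_right _ (Nat.pos_of_ne_zero (NeZero.ne n))
    have := Nat.one_lt_pow (by omega : Nat.gcd (2*t) n ≠ 0) (by omega : 1 < 2)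
    omega
  · have hLt : Linv (ZF n t) = 2 ^ Nat.gcd (2*t) n := by
      rw [ZF, if_neg hT]; exact linv_ft t
    have hLs : Linv (ZF n s) = 2 ^ Nat.gcd (2*s) n := by
      rw [ZF, if_neg hS2]; exact linv_ft s
    rw [hLt, hLs] at hLinv
    have hg : Nat.gcd (2*t) n = Nat.gcd (2*s) n :=
      Nat.pow_right_injective (le_refl 2) hLinv
    have hSt : Sinv (ZF n t) = Sinv (Ft n t) := by rw [ZF, if_neg hT]
    have hSs : Sinv (ZF n s) = Sinv (Ft n s) := by rw [ZF, if_neg hS2]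
    rcases Nat.mod_two_eq_zero_or_one (n / Nat.gcd t n) with hmt | hmt <;>
      rcases Nat.mod_two_eq_zero_or_one (n / Nat.gcd s n) with hms | hms
    · have e1 := gcd2t_eq (n := n) ht1 hmt
      have e2 := gcd2t_eq (n := n) hs1 hms
      omega
    · exfalso
      have hz : Sinv (Ft n s) = 0 := sinv_ft_odd hs1 hms
      have hnz : Sinv (Ft n t) ≠ 0 := sinv_ft_even_ne ht1 (by omega) hmt
      rw [hSt, hSs, hz] at hSinv
      exact hnz hSinv
    · exfalso
      have hz : Sinv (Ft n t) = 0 := sinv_ft_odd ht1 hmt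
      have hnz : Sinv (Ft n s) ≠ 0 := sinv_ft_even_ne hs1 (by omega) hms
      rw [hSt, hSs, hz] at hSinv
      exact hnz hSinv.symm
    · have e1 := gcd2t_odd (n := n) ht1 hmt
      have e2 := gcd2t_odd (n := n) hs1 hms
      omega

lemma affEquiv_of_gcd_eq {t s : ℕ} (ht1 : 1 ≤ t) (ht2 : 2 * t ≤ n)
    (hs1 : 1 ≤ s) (hs2 : 2 * s ≤ n)
    (hg : Nat.gcd t n = Nat.gcd s n) : AffEquiv n (rsFun n t) (rsFun n s) := by
  by_cases hT : 2 * t = n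
  · have hdt : Nat.gcd t n = t := Nat.gcd_eq_left ⟨2, by omega⟩
    have hsdvd : t ∣ s := by rw [← hdt, hg]; exact Nat.gcd_dvd_left s n
    have hle := Nat.le_of_dvd hs1 hsdvd
    rw [show s = t by omega]
    exact affEquiv_refl _
  · by_cases hS : 2 * s = n
    · exfalso
      have hds : Nat.gcd s n = s := Nat.gcd_eq_left ⟨2, by omega⟩
      have htdvd : s ∣ t := by rw [← hds, ← hg]; exact Nat.gcd_dvd_left t n
      have := Nat.le_of_dvd ht1 htdvd
      omega
    · exact affEquiv_trans (affEquiv_rsFun_gcd ht1 ht2 hT)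
        (by rw [hg]; exact affEquiv_symm (affEquiv_rsFun_gcd hs1 hs2 hS))

end Classify
end MrsAux

namespace MrsAux

def cls (n t : ℕ) : Set ((Fin n → ZMod 2) → ZMod 2) :=
  {g | (∃ s, 1 ≤ s ∧ s ≤ n / 2 ∧ g = rsFun n s) ∧ AffEquiv n (rsFun n t) g}

end MrsAux

open MrsAux in
/-- The quadratic MRS functions in `n ≥ 3` variables fall into exactly `τ(n) - 1`
affine equivalence classes. -/
theorem mrs_affine_equivalence_classes (n : ℕ) (hn : 3 ≤ n) :
    Nat.card {C : Set ((Fin n → ZMod 2) → ZMod 2) //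
      ∃ t, 1 ≤ t ∧ t ≤ n / 2 ∧
        C = {g | (∃ s, 1 ≤ s ∧ s ≤ n / 2 ∧ g = rsFun n s) ∧ AffEquiv n (rsFun n t) g}} =
    (Nat.divisors n).card - 1 := by
  haveI : NeZero n := ⟨by omega⟩
  classical
  have hdiv : ∀ d ∈ (Nat.divisors n).erase n, 1 ≤ d ∧ d ≤ n / 2 := by
    intro d hd
    rw [Finset.mem_erase, Nat.mem_divisors] at hd
    obtain ⟨hne, hdvd, -⟩ := hd
    have hpos : 0 < d := Nat.pos_of_dvd_of_pos hdvd (by omega)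
    obtain ⟨k, hk⟩ := hdvd
    have hk0 : k ≠ 0 := by rintro rfl; rw [mul_zero] at hk; omega
    have hk1 : k ≠ 1 := by rintro rfl; rw [mul_one] at hk; exact hne hk.symm
    have h2d : 2 * d ≤ n := by
      have h1 : d * 2 ≤ d * k := Nat.mul_le_mul_left d (by omega)
      rw [hk]
      linarith
    exact ⟨hpos, by omega⟩
  have hCl_eq : ∀ t s, 1 ≤ t → t ≤ n/2 → 1 ≤ s → s ≤ n/2 →
      Nat.gcd t n = Nat.gcd s n → cls n t = cls n s := by
    intro t s ht1 ht2 hs1 hs2 hg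
    have he : AffEquiv n (rsFun n t) (rsFun n s) :=
      affEquiv_of_gcd_eq ht1 (by omega) hs1 (by omega) hg
    ext g
    constructor
    · rintro ⟨hw, h2⟩
      exact ⟨hw, affEquiv_trans (affEquiv_symm he) h2⟩
    · rintro ⟨hw, h2⟩
      exact ⟨hw, affEquiv_trans he h2⟩
  have hmain : Nat.card {d : ℕ // d ∈ (Nat.divisors n).erase n}
      = Nat.card {C : Set ((Fin n → ZMod 2) → ZMod 2) //
          ∃ t, 1 ≤ t ∧ t ≤ n / 2 ∧ C = cls n t} := by
    apply Nat.card_eq_of_bijective (fun dd =>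
      ⟨cls n dd.1, dd.1, (hdiv dd.1 dd.2).1, (hdiv dd.1 dd.2).2, rfl⟩)
    constructor
    · intro d1 d2 h12
      have hC : cls n d1.1 = cls n d2.1 := congrArg Subtype.val h12
      have hmem : rsFun n d2.1 ∈ cls n d2.1 :=
        ⟨⟨d2.1, (hdiv _ d2.2).1, (hdiv _ d2.2).2, rfl⟩, affEquiv_refl _⟩
      rw [← hC] at hmem
      obtain ⟨-, he⟩ := hmem
      have hg := gcd_eq_of_affEquiv (hdiv _ d1.2).1
        (by have := (hdiv _ d1.2).2; omega)
        (hdiv _ d2.2).1 (by have := (hdiv _ d2.2).2; omega) he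
      have hd1 : Nat.gcd d1.1 n = d1.1 := Nat.gcd_eq_left (by
        have h := d1.2; rw [Finset.mem_erase, Nat.mem_divisors] at h; exact h.2.1)
      have hd2 : Nat.gcd d2.1 n = d2.1 := Nat.gcd_eq_left (by
        have h := d2.2; rw [Finset.mem_erase, Nat.mem_divisors] at h; exact h.2.1)
      exact Subtype.ext (by rw [← hd1, ← hd2]; exact hg)
    · rintro ⟨C, t, ht1, ht2, rfl⟩
      have hgd : Nat.gcd t n ∣ n := Nat.gcd_dvd_right t n
      have hgle : Nat.gcd t n ≤ t := Nat.gcd_le_left n ht1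
      have hmemD : Nat.gcd t n ∈ (Nat.divisors n).erase n := by
        rw [Finset.mem_erase, Nat.mem_divisors]
        exact ⟨by omega, hgd, by omega⟩
      refine ⟨⟨Nat.gcd t n, hmemD⟩, ?_⟩
      apply Subtype.ext
      show cls n (Nat.gcd t n) = cls n t
      exact hCl_eq _ _ (hdiv _ hmemD).1 (hdiv _ hmemD).2 ht1 ht2
        (by rw [Nat.gcd_eq_left hgd])
  show Nat.card {C : Set ((Fin n → ZMod 2) → ZMod 2) //
      ∃ t, 1 ≤ t ∧ t ≤ n / 2 ∧ C = cls n t} = (Nat.divisors n).card - 1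
  rw [← hmain, Nat.card_eq_fintype_card, Fintype.card_coe]
  exact Finset.card_erase_of_mem (Nat.mem_divisors_self n (by omega))
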